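/- Let (V, ω) be a finite-dimensional real symplectic vector space (ω a nondegenerate alternating bilinear form) and let heis(V,ω) := ℝ ⊕ V be the Heisenberg Lie algebra with bracket [(z,v), (z′,v′)] = (ω(v,v′), 0). Then every pointed invariant cone C in heis(V,ω) (a closed convex cone with C ∩ (−C) = {0} and e^{ad x}(C) = C for all x ∈ heis(V,ω)) is contained in the center ℝ ⊕ {0}; hence, up to sign, the only nonzero pointed invariant cone of this form spanning the center is ℝ₊·(1,0). -/

import Mathlib

/-- The adjoint action `ad x` of an element `x` of the Heisenberg Lie algebra
`heis(V,ω) = ℝ ⊕ V`, with bracket `[(z,v),(z′,v′)] = (ω(v,v′), 0)`, as a linear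
endomorphism of `ℝ × V`. -/
def heisAd {V : Type*} [AddCommGroup V] [Module ℝ V]
    (ω : V →ₗ[ℝ] V →ₗ[ℝ] ℝ) (x : ℝ × V) : (ℝ × V) →ₗ[ℝ] (ℝ × V) where
  toFun w := (ω x.2 w.2, 0)
  map_add' a b := by simp [Prod.ext_iff]
  map_smul' r a := by simp [Prod.ext_iff]

/-- The exponential `e^{ad x}` on the Heisenberg Lie algebra, defined by the
exponential series. -/
noncomputable def heisExpAd {V : Type*} [AddCommGroup V] [Module ℝ V]
    [TopologicalSpace V] (ω : V →ₗ[ℝ] V →ₗ[ℝ] ℝ) (x : ℝ × V) (w : ℝ × V) : ℝ × V :=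
  ∑' n : ℕ, ((n.factorial : ℝ)⁻¹) • ((heisAd ω x ^ n) w)

lemma heisExpAd_apply {V : Type*} [NormedAddCommGroup V] [NormedSpace ℝ V]
    (ω : V →ₗ[ℝ] V →ₗ[ℝ] ℝ) (x w : ℝ × V) :
    heisExpAd ω x w = (w.1 + ω x.2 w.2, w.2) := by
  have hz : ∀ n ∉ ({0, 1} : Finset ℕ),
      ((n.factorial : ℝ)⁻¹) • ((heisAd ω x ^ n) w) = 0 := by
    intro n hn
    simp only [Finset.mem_insert, Finset.mem_singleton, not_or] at hn
    obtain ⟨m, rfl⟩ : ∃ m, n = m + 2 := ⟨n - 2, by omega⟩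
    have : (heisAd ω x ^ (m + 2)) w = 0 := by
      have h2 : (heisAd ω x) ((heisAd ω x) w) = 0 := by
        simp [heisAd, Prod.ext_iff]
      calc (heisAd ω x ^ (m + 2)) w
          = (heisAd ω x ^ m) ((heisAd ω x) ((heisAd ω x) w)) := by
            rw [pow_succ, pow_succ]; rfl
        _ = 0 := by rw [h2, map_zero]
    rw [this, smul_zero]
  rw [heisExpAd, tsum_eq_sum hz]
  simp [heisAd, Prod.ext_iff, pow_one, pow_zero]

/-- let `(V,ω)` be a finite-dimensional real symplectic vector space and
`heis(V,ω) = ℝ ⊕ V` the Heisenberg Lie algebra with bracket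
`[(z,v),(z′,v′)] = (ω(v,v′),0)`. Every pointed invariant cone `C` in `heis(V,ω)` is
contained in the center `ℝ ⊕ {0}`; hence, up to sign, the only nonzero pointed
invariant cone of this form spanning the center is `ℝ₊·(1,0)`. -/
theorem statement18 {V : Type*} [NormedAddCommGroup V] [NormedSpace ℝ V]
    [FiniteDimensional ℝ V]
    (ω : V →ₗ[ℝ] V →ₗ[ℝ] ℝ)
    (halt : ∀ v : V, ω v v = 0)
    (hnondeg : ∀ v : V, (∀ w : V, ω v w = 0) → v = 0)
    (C : Set (ℝ × V)) (hCcl : IsClosed C) (hCcv : Convex ℝ C)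
    (hCcone : ∀ r : ℝ, 0 ≤ r → ∀ x ∈ C, r • x ∈ C)
    (hCpt : C ∩ (-C) = {0})
    (hCinv : ∀ x : ℝ × V, heisExpAd ω x '' C = C) :
    C ⊆ {p : ℝ × V | p.2 = 0} ∧
      (C = {0} ∨ C = {p : ℝ × V | ∃ r : ℝ, 0 ≤ r ∧ p = (r, 0)} ∨
        C = {p : ℝ × V | ∃ r : ℝ, r ≤ 0 ∧ p = (r, 0)}) := by
  have h0 : (0 : ℝ × V) ∈ C := by
    have : (0 : ℝ × V) ∈ C ∩ (-C) := by rw [hCpt]; rfl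
    exact this.1
  have hnot11 : ¬ ((1, (0:V)) ∈ C ∧ ((-1 : ℝ), (0:V)) ∈ C) := by
    rintro ⟨h1, h2⟩
    have : ((1:ℝ), (0:V)) ∈ C ∩ (-C) := ⟨h1, by
      simp only [Set.mem_neg, Prod.neg_mk, neg_zero]; exact h2⟩
    rw [hCpt] at this
    simp [Prod.ext_iff] at this
  -- shifting the central coordinate
  have hshift : ∀ p ∈ C, ∀ t : ℝ, p.2 ≠ 0 → (p.1 + t, p.2) ∈ C := by
    intro p hp t hv
    obtain ⟨u, hu⟩ : ∃ u, ω p.2 u ≠ 0 := by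
      by_contra h
      push_neg at h
      exact hv (hnondeg p.2 fun w => h w)
    -- skew: ω u p.2 = - ω p.2 u ≠ 0
    have hskew : ω u p.2 = - ω p.2 u := by
      have h1 := halt (u + p.2)
      have h2 := halt u
      have h3 := halt p.2
      simp only [map_add, LinearMap.add_apply] at h1
      linarith
    have huv : ω u p.2 ≠ 0 := by rw [hskew]; exact neg_ne_zero.mpr hu
    set c : ℝ := t / ω u p.2 with hc
    have : heisExpAd ω (0, c • u) p ∈ C := by
      rw [← hCinv (0, c • u)]
      exact Set.mem_image_of_mem _ hp
    rw [heisExpAd_apply] at this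
    simpa [map_smul, hc, div_mul_cancel₀ _ huv] using this
  -- first part
  have hsub : C ⊆ {p : ℝ × V | p.2 = 0} := by
    intro p hp
    by_contra hv
    simp only [Set.mem_setOf_eq] at hv
    -- (a, 0) ∈ C for every a
    have hall : ∀ a : ℝ, ((a, (0:V)) : ℝ × V) ∈ C := by
      intro a
      have hmem : ∀ n : ℕ, ((a, ((n+1:ℝ))⁻¹ • p.2) : ℝ × V) ∈ C := by
        intro n
        have h1 : ((a * (n+1), p.2) : ℝ × V) ∈ C := by
          have := hshift p hp (a * (n+1) - p.1) hv
          simpa using this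
        have h2 := hCcone ((n+1:ℝ))⁻¹ (by positivity) _ h1
        have hne : ((n:ℝ)+1) ≠ 0 := by positivity
        have heq : ((n+1:ℝ))⁻¹ • ((a * (n+1), p.2) : ℝ × V)
            = ((a, ((n+1:ℝ))⁻¹ • p.2) : ℝ × V) := by
          rw [Prod.smul_def]
          congr 1
          field_simp
          rw [smul_eq_mul]; field_simp
        rwa [heq] at h2
      have h2 : Filter.Tendsto (fun n : ℕ => ((n+1:ℝ))⁻¹ • p.2) Filter.atTop (nhds 0) := by
        have h3 : Filter.Tendsto (fun n : ℕ => ((n+1:ℝ))⁻¹) Filter.atTop (nhds 0) := by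
          simpa only [one_div] using tendsto_one_div_add_atTop_nhds_zero_nat (𝕜 := ℝ)
        simpa using h3.smul_const p.2
      have hlim : Filter.Tendsto (fun n : ℕ => ((a, ((n+1:ℝ))⁻¹ • p.2) : ℝ × V))
          Filter.atTop (nhds ((a, (0:V)) : ℝ × V)) :=
        tendsto_const_nhds.prodMk_nhds h2
      exact hCcl.mem_of_tendsto hlim (Filter.Eventually.of_forall hmem)
    exact hnot11 ⟨hall 1, hall (-1)⟩
  refine ⟨hsub, ?_⟩
  -- second part
  by_cases htriv : ∀ q ∈ C, q = 0
  · left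
    exact Set.eq_singleton_iff_unique_mem.mpr ⟨h0, htriv⟩
  push_neg at htriv
  obtain ⟨q, hq, hqne⟩ := htriv
  have hq2 : q.2 = 0 := hsub hq
  have hq1 : q.1 ≠ 0 := by
    intro h
    exact hqne (Prod.ext h hq2)
  have hscale : ∀ r : ℝ, r ∈ C.image Prod.fst → r ≠ 0 →
      ∀ s : ℝ, 0 ≤ s / r → ((s, (0:V)) : ℝ × V) ∈ C := by
    rintro r ⟨p, hp, rfl⟩ hr s hs
    have h2 : p.2 = 0 := hsub hp
    have := hCcone (s / p.1) hs p hp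
    have hps : (s / p.1) • p = ((s, (0:V)) : ℝ × V) := by
      rw [Prod.smul_def, h2, smul_zero]
      simp [smul_eq_mul, div_mul_cancel₀ _ hr]
    rwa [hps] at this
  rcases lt_or_gt_of_ne hq1 with hneg | hpos
  · -- q.1 < 0 : C = nonpositive ray
    right; right
    ext p
    constructor
    · intro hp
      have hp2 : p.2 = 0 := hsub hp
      refine ⟨p.1, ?_, by rw [← hp2]⟩
      by_contra hcon
      push_neg at hcon
      have h1 : ((1:ℝ), (0:V)) ∈ C :=
        hscale p.1 ⟨p, hp, rfl⟩ (ne_of_gt hcon) 1 (by positivity)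
      have h2 : ((-1:ℝ), (0:V)) ∈ C :=
        hscale q.1 ⟨q, hq, rfl⟩ hq1 (-1) (div_pos_of_neg_of_neg (by norm_num) hneg).le
      exact hnot11 ⟨h1, h2⟩
    · rintro ⟨r, hr, rfl⟩
      rcases eq_or_lt_of_le hr with h | h
      · subst h
        have : ((0:ℝ), (0:V)) = (0 : ℝ × V) := rfl
        rw [this]; exact h0
      · exact hscale q.1 ⟨q, hq, rfl⟩ hq1 r (div_pos_of_neg_of_neg h hneg).le
  · -- q.1 > 0 : C = nonnegative ray
    right; left
    ext p
    constructor
    · intro hp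
      have hp2 : p.2 = 0 := hsub hp
      refine ⟨p.1, ?_, by rw [← hp2]⟩
      by_contra hcon
      push_neg at hcon
      have h1 : ((1:ℝ), (0:V)) ∈ C :=
        hscale q.1 ⟨q, hq, rfl⟩ hq1 1 (by positivity)
      have h2 : ((-1:ℝ), (0:V)) ∈ C :=
        hscale p.1 ⟨p, hp, rfl⟩ (ne_of_lt hcon) (-1)
          (div_pos_of_neg_of_neg (by norm_num) hcon).le
      exact hnot11 ⟨h1, h2⟩
    · rintro ⟨r, hr, rfl⟩
      exact hscale q.1 ⟨q, hq, rfl⟩ hq1 r (div_nonneg hr hpos.le)
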